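/- If a unitary W on n qubits (n ≥ 3) is a finite product W = Π_k exp(iθ_k R_{i_k j_k}) of exponentials of XY interactions, then for every m, det(Π^(m) W Π^(m)) = 1 (determinant taken on the range of Π^(m)), and moreover det(P_± W P_±) = 1 on the ±1 eigenspaces of X^{⊗n}. -/

import Mathlib

open Matrix
open scoped BigOperators
open NormedSpace

noncomputable section

/-- Computational basis states of `n` qubits: bit strings of length `n`. -/
abbrev QState (n : ℕ) := Fin n → Fin 2

/-- Matrices on the `n`-qubit Hilbert space `(ℂ²)^⊗n`, written in the computational basis. -/
abbrev QMat (n : ℕ) := Matrix (QState n) (QState n) ℂ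

/-- Matrix exponential, defined by its power series. -/
def mexp {m : Type*} [Fintype m] [DecidableEq m] (A : Matrix m m ℂ) : Matrix m m ℂ :=
  ∑' k : ℕ, ((k.factorial : ℂ)⁻¹) • A ^ k

/-- Hamming weight of a bit string. -/
def hamWeight {n : ℕ} (b : QState n) : ℕ := ∑ j, (b j : ℕ)

/-- Bitwise negation of a bit string. -/
def bflip {n : ℕ} (b : QState n) : QState n := fun j => b j + 1

/-- The operator `X^{⊗n}` flipping all qubits. -/
def XallMat (n : ℕ) : QMat n := fun b b' => if b' = bflip b then 1 else 0

/-- The projector `Π^(m)` onto the span of computational basis states of Hamming weight `m`. -/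
def ProjW (n m : ℕ) : QMat n :=
  Matrix.diagonal (fun b => if hamWeight b = m then 1 else 0)

/-- The eigenvalue `±1` of Pauli `Z` on a single-qubit basis label. -/
def zval : Fin 2 → ℂ := fun x => if x = 0 then 1 else -1

/-- Pauli `Z` acting on qubit `j` (tensored with identity elsewhere). -/
def Zmat (n : ℕ) (j : Fin n) : QMat n := Matrix.diagonal (fun b => zval (b j))

/-- The total Hamiltonian `Σ_j Z_j`. -/
def sumZ (n : ℕ) : QMat n := ∑ j, Zmat n j

/-- The XY interaction `R_{ij} = (X_i X_j + Y_i Y_j)/2 = |01⟩⟨10| + |10⟩⟨01|` on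
qubits `i, j`, tensored with identity elsewhere. -/
def Rmat (n : ℕ) (i j : Fin n) : QMat n := fun b b' =>
  if b i ≠ b j ∧ b' i = b j ∧ b' j = b i ∧ (∀ k, k ≠ i → k ≠ j → b' k = b k) then 1 else 0

/-- The determinant of (the block of) `A` on the range of a projector `P`,
computed as `det (P A P + (1 − P))`. -/
def sectorDet {ι : Type*} [Fintype ι] [DecidableEq ι] (P A : Matrix ι ι ℂ) : ℂ :=
  (P * A * P + (1 - P)).det


section Generic
variable {ι : Type*} [Fintype ι] [DecidableEq ι]

def entryLM (b b' : ι) : Matrix ι ι ℂ →ₗ[ℂ] ℂ where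
  toFun M := M b b'
  map_add' _ _ := rfl
  map_smul' _ _ := rfl

lemma entry_deriv (A : Matrix ι ι ℂ) (t : ℂ) (b b' : ι) :
    HasDerivAt (fun u : ℂ => exp (u • A) b b') ((exp (t • A) * A) b b') t := by
  letI : SeminormedRing (Matrix ι ι ℂ) := Matrix.linftyOpSemiNormedRing
  letI : NormedRing (Matrix ι ι ℂ) := Matrix.linftyOpNormedRing
  letI : NormedAlgebra ℂ (Matrix ι ι ℂ) := Matrix.linftyOpNormedAlgebra
  have h1 := hasDerivAt_exp_smul_const (𝕂 := ℂ) A t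
  have h2 := ((entryLM b b').toContinuousLinearMap.hasFDerivAt
      (x := exp (t • A))).comp_hasDerivAt t h1
  exact h2

lemma det_exp_deriv_zero (A : Matrix ι ι ℂ) :
    HasDerivAt (fun u : ℂ => (exp (u • A)).det) A.trace 0 := by
  have hdet : (fun u : ℂ => (exp (u • A)).det)
      = fun u => ∑ σ : Equiv.Perm ι, (Equiv.Perm.sign σ : ℂ) * ∏ i, exp (u • A) (σ i) i :=
    funext fun u => Matrix.det_apply' _
  rw [hdet]
  have hD : HasDerivAt
      (fun u => ∑ σ : Equiv.Perm ι, (Equiv.Perm.sign σ : ℂ) * ∏ i, exp (u • A) (σ i) i)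
      (∑ σ : Equiv.Perm ι, (Equiv.Perm.sign σ : ℂ) *
        (∑ i, (∏ j ∈ Finset.univ.erase i, exp ((0:ℂ) • A) (σ j) j) •
          ((exp ((0:ℂ) • A) * A) (σ i) i))) (0:ℂ) := by
    apply HasDerivAt.fun_sum
    intro σ _
    exact (HasDerivAt.fun_finset_prod (fun i _ => entry_deriv A (0:ℂ) (σ i) i)).const_mul _
  convert hD using 1
  rw [zero_smul, exp_zero]
  rw [Finset.sum_eq_single (1 : Equiv.Perm ι)]
  · simp only [Matrix.trace, Matrix.diag, smul_eq_mul, Equiv.Perm.sign_one, Units.val_one,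
      Int.cast_one, one_mul, Matrix.one_mul]
    refine (Finset.sum_congr rfl fun x _ => ?_).symm
    have h1 : ∀ j ∈ Finset.univ.erase x, (1 : Matrix ι ι ℂ) ((1 : Equiv.Perm ι) j) j = 1 :=
      fun j _ => Matrix.one_apply_eq j
    rw [Finset.prod_congr rfl h1, Finset.prod_const_one, one_mul]
    rfl
  · intro σ _ hσ
    have : ∀ i : ι, ∃ j ∈ Finset.univ.erase i, (1 : Matrix ι ι ℂ) (σ j) j = 0 := by
      intro i
      obtain ⟨a, ha⟩ : ∃ a, σ a ≠ a := by
        by_contra h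
        push_neg at h
        exact hσ (Equiv.ext h)
      rcases eq_or_ne a i with rfl | hai
      · refine ⟨σ a, Finset.mem_erase.2 ⟨ha, Finset.mem_univ _⟩, ?_⟩
        rw [Matrix.one_apply_ne]
        intro hc
        exact ha (σ.injective hc)
      · exact ⟨a, Finset.mem_erase.2 ⟨hai, Finset.mem_univ _⟩,
          Matrix.one_apply_ne ha⟩
    apply mul_eq_zero_of_right
    apply Finset.sum_eq_zero
    intro i _
    obtain ⟨j, hj, hj0⟩ := this i
    have hz : (∏ j ∈ Finset.univ.erase i, (1 : Matrix ι ι ℂ) (σ j) j) = 0 :=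
      Finset.prod_eq_zero hj hj0
    rw [hz, zero_smul]
  · simp

lemma det_exp (A : Matrix ι ι ℂ) : (exp A).det = Complex.exp A.trace := by
  set f : ℂ → ℂ := fun u => (exp (u • A)).det with hf
  have hmul : ∀ s t : ℂ, f (s + t) = f s * f t := by
    intro s t
    have hc : Commute (s • A) (t • A) := ((Commute.refl A).smul_left s).smul_right t
    simp only [hf]
    rw [add_smul, Matrix.exp_add_of_commute _ _ hc, Matrix.det_mul]
  have ht : ∀ t : ℂ, HasDerivAt f (A.trace * f t) t := by
    intro t
    have h0' : HasDerivAt (fun h : ℂ => f (t + h)) (f t * A.trace) 0 := by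
      have he : (fun h : ℂ => f (t + h)) = fun h => f t * f h := funext fun h => hmul t h
      rw [he]
      exact (det_exp_deriv_zero A).const_mul (f t)
    have h2 := HasDerivAt.comp_add_const (f := fun h : ℂ => f (t + h))
      (f' := f t * A.trace) t (-t) (by simpa using h0')
    have he2 : (fun x : ℂ => f (t + (x + -t))) = f :=
      funext fun x => congrArg f (by ring)
    rw [he2] at h2
    simpa [mul_comm] using h2
  set g : ℂ → ℂ := fun t => f t * Complex.exp (-(A.trace * t)) with hg
  have hgd : ∀ t : ℂ, HasDerivAt g 0 t := by
    intro t
    have hinner : HasDerivAt (fun t : ℂ => -(A.trace * t)) (-A.trace) t := by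
      exact (((hasDerivAt_id t).const_mul A.trace).neg).congr_deriv (by simp)
    have he : HasDerivAt (fun t : ℂ => Complex.exp (-(A.trace * t)))
        (Complex.exp (-(A.trace * t)) * -A.trace) t := by
      simpa using hinner.cexp
    have hprod := (ht t).mul he
    exact hprod.congr_deriv (by ring)
  have hconst := is_const_of_deriv_eq_zero (𝕜 := ℂ)
      (fun t => (hgd t).differentiableAt) (fun t => (hgd t).deriv) 1 0
  have hg0 : g 0 = 1 := by
    simp [hg, hf, exp_zero]
  have hg1 : g 1 = (exp A).det * Complex.exp (-A.trace) := by
    simp [hg, hf]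
  rw [hg1, hg0] at hconst
  have h3 := congrArg (· * Complex.exp A.trace) hconst
  simp only [mul_assoc, ← Complex.exp_add, one_mul] at h3
  simpa using h3


lemma proj_pow (P : Matrix ι ι ℂ) (hP : P * P = P) :
    ∀ k : ℕ, 1 ≤ k → P ^ k = P
  | 1, _ => pow_one P
  | (k+2), _ => by rw [pow_succ, proj_pow P hP (k+1) (by omega), hP]

lemma exp_mul_proj (A P : Matrix ι ι ℂ) (hP : P * P = P) (hc : P * A = A * P) :
    exp (A * P) = exp A * P + (1 - P) := by
  letI : SeminormedRing (Matrix ι ι ℂ) := Matrix.linftyOpSemiNormedRing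
  letI : NormedRing (Matrix ι ι ℂ) := Matrix.linftyOpNormedRing
  letI : NormedAlgebra ℂ (Matrix ι ι ℂ) := Matrix.linftyOpNormedAlgebra
  have hsum : Summable (fun k : ℕ => ((k.factorial : ℂ))⁻¹ • A ^ k) :=
    expSeries_summable' (𝕂 := ℂ) A
  have hkey : ∀ k : ℕ, ((k.factorial : ℂ))⁻¹ • (A * P) ^ k
      = (((k.factorial : ℂ))⁻¹ • A ^ k) * P
        + (if k = 0 then (1 : Matrix ι ι ℂ) - P else 0) := by
    intro k
    rcases Nat.eq_zero_or_pos k with rfl | hk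
    · simp
    · have hcomm : Commute A P := hc.symm
      rw [hcomm.mul_pow, proj_pow P hP k hk, if_neg (by omega), add_zero, smul_mul_assoc]
  simp only [exp_eq_tsum ℂ]
  calc (∑' k : ℕ, ((k.factorial : ℂ))⁻¹ • (A * P) ^ k)
      = ∑' k : ℕ, ((((k.factorial : ℂ))⁻¹ • A ^ k) * P
          + (if k = 0 then (1 : Matrix ι ι ℂ) - P else 0)) := tsum_congr hkey
    _ = (∑' k : ℕ, (((k.factorial : ℂ))⁻¹ • A ^ k) * P)
          + ∑' k : ℕ, (if k = 0 then (1 : Matrix ι ι ℂ) - P else 0) :=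
        Summable.tsum_add (hsum.mul_right P) ((hasSum_ite_eq 0 ((1 : Matrix ι ι ℂ) - P)).summable)
    _ = (∑' k : ℕ, ((k.factorial : ℂ))⁻¹ • A ^ k) * P + ((1 : Matrix ι ι ℂ) - P) := by
        rw [hsum.tsum_mul_right, tsum_ite_eq]

lemma sectorDet_one (P : Matrix ι ι ℂ) (hP : P * P = P) : sectorDet P 1 = 1 := by
  unfold sectorDet
  rw [mul_one, hP]
  simp

lemma sectorDet_mul (P A B : Matrix ι ι ℂ) (hP : P * P = P)
    (hA : P * A = A * P) (hB : P * B = B * P) :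
    sectorDet P (A * B) = sectorDet P A * sectorDet P B := by
  unfold sectorDet
  rw [← Matrix.det_mul]
  congr 1
  have e1 : P * A * P = A * P := by rw [hA, mul_assoc, hP]
  have e2 : P * B * P = B * P := by rw [hB, mul_assoc, hP]
  have e3 : P * (A * B) * P = A * B * P := by
    rw [← mul_assoc, hA, mul_assoc A P B, hB, ← mul_assoc, mul_assoc (A*B) P P, hP]
  rw [e1, e2, e3]
  have h4 : A * P * (B * P) = A * B * P := by
    rw [mul_assoc A P (B * P), ← mul_assoc P B P, e2, ← mul_assoc]
  have h5 : A * P * ((1:Matrix ι ι ℂ) - P) = 0 := by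
    rw [mul_sub, mul_one, mul_assoc, hP, sub_self]
  have h6 : ((1:Matrix ι ι ℂ) - P) * (B * P) = 0 := by
    rw [sub_mul, one_mul, ← mul_assoc, hB, mul_assoc, hP, sub_self]
  have h7 : ((1:Matrix ι ι ℂ) - P) * ((1:Matrix ι ι ℂ) - P) = 1 - P := by
    rw [sub_mul, one_mul, mul_sub, mul_one, hP]
    simp
  rw [add_mul, mul_add, mul_add, h4, h5, h6, h7, add_zero, zero_add]

lemma sectorDet_exp (P A : Matrix ι ι ℂ) (hP : P * P = P)
    (hc : P * A = A * P) (htr : (A * P).trace = 0) :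
    sectorDet P (exp A) = 1 := by
  have hPe : P * exp A = exp A * P := (Commute.exp_right hc).eq
  unfold sectorDet
  have h1 : P * exp A * P = exp A * P := by rw [hPe, mul_assoc, hP]
  rw [h1, ← exp_mul_proj A P hP hc, det_exp, htr, Complex.exp_zero]

lemma sectorDet_list_prod (P : Matrix ι ι ℂ) (hP : P * P = P) :
    ∀ l : List (Matrix ι ι ℂ), (∀ A ∈ l, P * A = A * P ∧ sectorDet P A = 1) →
      P * l.prod = l.prod * P ∧ sectorDet P l.prod = 1
  | [], _ => ⟨by simp, sectorDet_one P hP⟩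
  | A :: l, h => by
      obtain ⟨hA, hdA⟩ := h A (List.mem_cons_self)
      obtain ⟨hc, hd⟩ := sectorDet_list_prod P hP l (fun B hB => h B (List.mem_cons_of_mem _ hB))
      refine ⟨?_, ?_⟩
      · rw [List.prod_cons, ← mul_assoc, hA, mul_assoc, hc, mul_assoc]
      · rw [List.prod_cons, sectorDet_mul P A l.prod hP hA hc, hdA, hd, one_mul]

end Generic

section Concrete
variable {n : ℕ}

lemma mexp_eq_exp {ι : Type*} [Fintype ι] [DecidableEq ι] (A : Matrix ι ι ℂ) :
    mexp A = exp A := by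
  rw [exp_eq_tsum ℂ]
  rfl

lemma bflip_bflip (b : QState n) : bflip (bflip b) = b := by
  funext k
  show b k + 1 + 1 = b k
  revert b
  intro b
  have : ∀ a : Fin 2, a + 1 + 1 = a := by decide
  exact this (b k)

lemma Rmat_diag (i j : Fin n) (b : QState n) : Rmat n i j b b = 0 := by
  simp only [Rmat]
  rw [if_neg]
  rintro ⟨h1, h2, -⟩
  exact h1 h2

lemma exists_third (hn : 3 ≤ n) (i j : Fin n) : ∃ k : Fin n, k ≠ i ∧ k ≠ j := by
  by_contra h
  push_neg at h
  have hsub : (Finset.univ : Finset (Fin n)) ⊆ {i, j} := by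
    intro k _
    rcases eq_or_ne k i with rfl | hk
    · simp
    · simp [h k hk]
  have hcard := Finset.card_le_card hsub
  rw [Finset.card_univ, Fintype.card_fin] at hcard
  have h2 : ({i, j} : Finset (Fin n)).card ≤ 2 := by
    apply le_trans (Finset.card_insert_le _ _)
    simp
  omega

lemma Rmat_flip (hn : 3 ≤ n) (i j : Fin n) (b : QState n) :
    Rmat n i j b (bflip b) = 0 := by
  obtain ⟨k, hki, hkj⟩ := exists_third hn i j
  simp only [Rmat]
  rw [if_neg]
  rintro ⟨-, -, -, h4⟩
  have hk := h4 k hki hkj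
  have : ∀ a : Fin 2, a + 1 ≠ a := by decide
  exact this (b k) hk

lemma hamWeight_swap (i j : Fin n) (b b' : QState n)
    (h1 : b i ≠ b j) (h2 : b' i = b j) (h3 : b' j = b i)
    (h4 : ∀ k, k ≠ i → k ≠ j → b' k = b k) :
    hamWeight b' = hamWeight b := by
  have hij : i ≠ j := fun he => h1 (by rw [he])
  have hji : j ≠ i := fun he => hij he.symm
  have hmem : j ∈ Finset.univ.erase i := Finset.mem_erase.2 ⟨hji, Finset.mem_univ _⟩
  have key : ∀ c : QState n, hamWeight c
      = (c i : ℕ) + ((c j : ℕ) + ∑ k ∈ (Finset.univ.erase i).erase j, (c k : ℕ)) := by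
    intro c
    unfold hamWeight
    rw [← Finset.add_sum_erase _ _ (Finset.mem_univ i), ← Finset.add_sum_erase _ _ hmem]
  rw [key b, key b', h2, h3]
  have htail : ∑ k ∈ (Finset.univ.erase i).erase j, (b' k : ℕ)
      = ∑ k ∈ (Finset.univ.erase i).erase j, (b k : ℕ) := by
    apply Finset.sum_congr rfl
    intro k hk
    have hkj : k ≠ j := (Finset.mem_erase.1 hk).1
    have hki : k ≠ i := (Finset.mem_erase.1 (Finset.mem_erase.1 hk).2).1
    rw [h4 k hki hkj]
  rw [htail]
  omega

lemma ProjW_idem (m : ℕ) : ProjW n m * ProjW n m = ProjW n m := by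
  rw [ProjW, Matrix.diagonal_mul_diagonal]
  refine congrArg Matrix.diagonal (funext fun b => ?_)
  by_cases h : hamWeight b = m <;> simp [h]

lemma ProjW_comm_R (m : ℕ) (i j : Fin n) :
    ProjW n m * Rmat n i j = Rmat n i j * ProjW n m := by
  ext b b'
  rw [ProjW, Matrix.diagonal_mul, Matrix.mul_diagonal]
  by_cases hc : b i ≠ b j ∧ b' i = b j ∧ b' j = b i ∧ (∀ k, k ≠ i → k ≠ j → b' k = b k)
  · obtain ⟨h1, h2, h3, h4⟩ := hc
    rw [hamWeight_swap i j b b' h1 h2 h3 h4]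
    ring
  · have hz : Rmat n i j b b' = 0 := by simp only [Rmat]; exact if_neg hc
    rw [hz, mul_zero, zero_mul]

lemma Xall_mul_Xall : XallMat n * XallMat n = 1 := by
  ext b b'
  rw [Matrix.mul_apply]
  simp only [XallMat]
  rw [Finset.sum_eq_single (bflip b) (fun c _ hc => by rw [if_neg hc, zero_mul])
      (fun h => absurd (Finset.mem_univ _) h)]
  rw [if_pos rfl, one_mul, bflip_bflip, Matrix.one_apply]
  by_cases h : b' = b
  · subst h; simp
  · rw [if_neg h, if_neg (fun he => h he.symm)]

lemma Xall_comm_R (i j : Fin n) : XallMat n * Rmat n i j = Rmat n i j * XallMat n := by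
  have f1 : ∀ a c : Fin 2, a + 1 ≠ c + 1 ↔ a ≠ c := by decide
  have f2 : ∀ a c : Fin 2, a = c + 1 ↔ a + 1 = c := by decide
  ext b b'
  rw [Matrix.mul_apply, Matrix.mul_apply]
  have hL : (∑ c, XallMat n b c * Rmat n i j c b') = Rmat n i j (bflip b) b' := by
    rw [Finset.sum_eq_single (bflip b)
      (fun c _ hc => by simp only [XallMat]; rw [if_neg hc, zero_mul])
      (fun h => absurd (Finset.mem_univ _) h)]
    simp [XallMat]
  have hR : (∑ c, Rmat n i j b c * XallMat n c b') = Rmat n i j b (bflip b') := by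
    rw [Finset.sum_eq_single (bflip b')
      (fun c _ hc => by
        simp only [XallMat]
        rw [if_neg (fun he => hc (by rw [he, bflip_bflip])), mul_zero])
      (fun h => absurd (Finset.mem_univ _) h)]
    simp [XallMat, bflip_bflip]
  rw [hL, hR]
  simp only [Rmat, bflip]
  refine if_congr ?_ rfl rfl
  constructor
  · rintro ⟨h1, h2, h3, h4⟩
    exact ⟨(f1 _ _).1 h1, (f2 _ _).1 h2, (f2 _ _).1 h3,
      fun k hki hkj => (f2 _ _).1 (h4 k hki hkj)⟩
  · rintro ⟨h1, h2, h3, h4⟩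
    exact ⟨(f1 _ _).2 h1, (f2 _ _).2 h2, (f2 _ _).2 h3,
      fun k hki hkj => (f2 _ _).2 (h4 k hki hkj)⟩

lemma trace_R (i j : Fin n) : (Rmat n i j).trace = 0 := by
  rw [Matrix.trace]
  apply Finset.sum_eq_zero
  intro b _
  exact Rmat_diag i j b

lemma trace_R_mul_ProjW (i j : Fin n) (m : ℕ) : (Rmat n i j * ProjW n m).trace = 0 := by
  rw [Matrix.trace]
  apply Finset.sum_eq_zero
  intro b _
  rw [Matrix.diag_apply, ProjW, Matrix.mul_diagonal, Rmat_diag, zero_mul]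

lemma trace_R_mul_X (hn : 3 ≤ n) (i j : Fin n) : (Rmat n i j * XallMat n).trace = 0 := by
  rw [Matrix.trace]
  apply Finset.sum_eq_zero
  intro b _
  rw [Matrix.diag_apply, Matrix.mul_apply]
  apply Finset.sum_eq_zero
  intro c _
  by_cases hcb : c = bflip b
  · subst hcb; rw [Rmat_flip hn i j b, zero_mul]
  · have hx : XallMat n c b = 0 := by
      simp only [XallMat]
      exact if_neg (fun he => hcb (by rw [he, bflip_bflip]))
    rw [hx, mul_zero]

end Concrete

/-- **Products of XY exponentials have unit sector determinants.** If `W` on `n ≥ 3`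
qubits is a finite product of exponentials `exp(iθ R_{ij})` of XY interactions, then
the determinant of its block on every Hamming-weight sector is 1, and likewise the
determinants of its blocks on the `±1` eigenspaces of `X^{⊗n}` are 1. -/
theorem XY_product_sector_det_one (n : ℕ) (hn : 3 ≤ n)
    (L : List (ℝ × Fin n × Fin n)) (hL : ∀ x ∈ L, x.2.1 ≠ x.2.2)
    (W : QMat n)
    (hW : W = (L.map (fun x => mexp ((Complex.I * x.1) • Rmat n x.2.1 x.2.2))).prod) :
    (∀ m : ℕ, sectorDet (ProjW n m) W = 1) ∧
    sectorDet ((2 : ℂ)⁻¹ • ((1 : QMat n) + XallMat n)) W = 1 ∧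
    sectorDet ((2 : ℂ)⁻¹ • ((1 : QMat n) - XallMat n)) W = 1 := by
  have main : ∀ P : QMat n, P * P = P →
      (∀ i j : Fin n, i ≠ j → P * Rmat n i j = Rmat n i j * P ∧ (Rmat n i j * P).trace = 0) →
      sectorDet P W = 1 := by
    intro P hP hPR
    rw [hW]
    refine (sectorDet_list_prod P hP _ ?_).2
    intro A hA
    obtain ⟨x, hx, rfl⟩ := List.mem_map.1 hA
    obtain ⟨hcomm, htr⟩ := hPR x.2.1 x.2.2 (hL x hx)
    rw [mexp_eq_exp]
    have hc2 : P * ((Complex.I * x.1) • Rmat n x.2.1 x.2.2)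
        = ((Complex.I * x.1) • Rmat n x.2.1 x.2.2) * P := by
      rw [Matrix.mul_smul, Matrix.smul_mul, hcomm]
    exact ⟨(Commute.exp_right hc2).eq,
      sectorDet_exp P _ hP hc2
        (by rw [Matrix.smul_mul, Matrix.trace_smul, htr, smul_zero])⟩
  have hsc : ((2:ℂ)⁻¹ * 2⁻¹) * 2 = 2⁻¹ := by norm_num
  have hidemp : ((2:ℂ)⁻¹ • ((1 : QMat n) + XallMat n)) * ((2:ℂ)⁻¹ • ((1 : QMat n) + XallMat n))
      = (2:ℂ)⁻¹ • ((1 : QMat n) + XallMat n) := by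
    rw [smul_mul_smul_comm]
    have hQ : ((1 : QMat n) + XallMat n) * ((1 : QMat n) + XallMat n)
        = (2:ℂ) • ((1 : QMat n) + XallMat n) := by
      simp only [mul_add, add_mul, one_mul, mul_one, Xall_mul_Xall, two_smul]
      abel
    rw [hQ, smul_smul, hsc]
  have hidemm : ((2:ℂ)⁻¹ • ((1 : QMat n) - XallMat n)) * ((2:ℂ)⁻¹ • ((1 : QMat n) - XallMat n))
      = (2:ℂ)⁻¹ • ((1 : QMat n) - XallMat n) := by
    rw [smul_mul_smul_comm]
    have hQ : ((1 : QMat n) - XallMat n) * ((1 : QMat n) - XallMat n)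
        = (2:ℂ) • ((1 : QMat n) - XallMat n) := by
      simp only [sub_mul, mul_sub, one_mul, mul_one, Xall_mul_Xall, two_smul]
      abel
    rw [hQ, smul_smul, hsc]
  have hcommp : ∀ i j : Fin n, ((2:ℂ)⁻¹ • ((1 : QMat n) + XallMat n)) * Rmat n i j
      = Rmat n i j * ((2:ℂ)⁻¹ • ((1 : QMat n) + XallMat n)) := by
    intro i j
    rw [Matrix.smul_mul, Matrix.mul_smul]
    congr 1
    rw [add_mul, mul_add, one_mul, mul_one, Xall_comm_R]
  have hcommm : ∀ i j : Fin n, ((2:ℂ)⁻¹ • ((1 : QMat n) - XallMat n)) * Rmat n i j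
      = Rmat n i j * ((2:ℂ)⁻¹ • ((1 : QMat n) - XallMat n)) := by
    intro i j
    rw [Matrix.smul_mul, Matrix.mul_smul]
    congr 1
    rw [sub_mul, mul_sub, one_mul, mul_one, Xall_comm_R]
  have htrp : ∀ i j : Fin n, (Rmat n i j * ((2:ℂ)⁻¹ • ((1 : QMat n) + XallMat n))).trace = 0 := by
    intro i j
    rw [Matrix.mul_smul, Matrix.trace_smul, mul_add, mul_one, Matrix.trace_add, trace_R,
      trace_R_mul_X hn, add_zero, smul_zero]
  have htrm : ∀ i j : Fin n, (Rmat n i j * ((2:ℂ)⁻¹ • ((1 : QMat n) - XallMat n))).trace = 0 := by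
    intro i j
    rw [Matrix.mul_smul, Matrix.trace_smul, mul_sub, mul_one, Matrix.trace_sub, trace_R,
      trace_R_mul_X hn, sub_zero, smul_zero]
  exact ⟨fun m => main _ (ProjW_idem m)
      (fun i j _ => ⟨ProjW_comm_R m i j, trace_R_mul_ProjW i j m⟩),
    main _ hidemp (fun i j _ => ⟨hcommp i j, htrp i j⟩),
    main _ hidemm (fun i j _ => ⟨hcommm i j, htrm i j⟩)⟩

end
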